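/- arXiv:2012.14529 — 3 statements merged into one kernel-verified Lean document; each statement's English description precedes it below -/
import Mathlib

section
/- Let V be a real vector space and let F : V × V → ℝ be a function satisfying: (i) F(X,Y) = F(Y,X) for all X,Y; (ii) F(X,Y) ≥ 0 for all X,Y; (iii) F(X, a·Y) = a²·F(X,Y) for all a ∈ ℝ and all X,Y; (iv) F(X, Y+Z) + F(X, Y−Z) = 2·F(X,Y) + 2·F(X,Z) for all X,Y,Z; and (v) F(X,X) = 0 for all X. If X₀, Y₀ ∈ V satisfy F(X₀,Y₀) = 0, then F(a·X₀ + b·Y₀, c·X₀ + d·Y₀) = 0 for all real numbers a, b, c, d. -/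
/-- If `F : V × V → ℝ` is symmetric, nonnegative, quadratic in each variable
(`F X (a • Y) = a ^ 2 * F X Y` and the parallelogram law), `F X X = 0` for all `X`, and
`F X₀ Y₀ = 0`, then `F` vanishes on the real span of `{X₀, Y₀}`:
`F (a • X₀ + b • Y₀) (c • X₀ + d • Y₀) = 0` for all reals `a b c d`. -/
theorem stmt8 {V : Type*} [AddCommGroup V] [Module ℝ V] (F : V → V → ℝ)
    (hsymm : ∀ X Y : V, F X Y = F Y X)
    (hpos : ∀ X Y : V, 0 ≤ F X Y)
    (hhom : ∀ (a : ℝ) (X Y : V), F X (a • Y) = a ^ 2 * F X Y)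
    (hpar : ∀ X Y Z : V, F X (Y + Z) + F X (Y - Z) = 2 * F X Y + 2 * F X Z)
    (hnorm : ∀ X : V, F X X = 0)
    (X₀ Y₀ : V) (hXY : F X₀ Y₀ = 0) :
    ∀ a b c d : ℝ, F (a • X₀ + b • Y₀) (c • X₀ + d • Y₀) = 0 := by
  have hadd : ∀ X Y Z : V, F X (Y + Z) ≤ 2 * F X Y + 2 * F X Z := by
    intro X Y Z
    nlinarith [hpar X Y Z, hpos X (Y - Z)]
  intro a b c d
  set W := a • X₀ + b • Y₀ with hW
  have h1 : F W X₀ = 0 := by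
    have := hadd X₀ (a • X₀) (b • Y₀)
    rw [hhom a X₀ X₀, hhom b X₀ Y₀, hnorm, hXY] at this
    have := hpos X₀ W
    rw [hsymm W X₀]
    nlinarith [hpos X₀ (a • X₀ + b • Y₀)]
  have h2 : F W Y₀ = 0 := by
    have := hadd Y₀ (a • X₀) (b • Y₀)
    rw [hhom a Y₀ X₀, hhom b Y₀ Y₀, hnorm, hsymm Y₀ X₀, hXY] at this
    rw [hsymm W Y₀]
    nlinarith [hpos Y₀ (a • X₀ + b • Y₀)]
  have h3 := hadd W (c • X₀) (d • Y₀)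
  rw [hhom c W X₀, hhom d W Y₀, h1, h2] at h3
  nlinarith [hpos W (c • X₀ + d • Y₀)]
end

section
/- Let U ⊆ ℂ be a nonempty open connected set and let U* := { conj z : z ∈ U } be its image under complex conjugation. Let F : ℂ × ℂ → ℂ be analytic (holomorphic as a function of two complex variables) on U × U*. If F(z, conj z) = 0 for every z ∈ U, then F(z, w) = 0 for every z ∈ U and every w ∈ U*. -/
open ComplexConjugate

open Complex Metric in
/-- One-variable identity principle: an analytic function on a ball centered at a real
point that vanishes at all real points of the ball vanishes on the ball. -/
lemma stmt11_onevar {f : ℂ → ℂ} {c : ℂ} {δ : ℝ} (hδ : 0 < δ) (hc : c.im = 0)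
    (hf : AnalyticOnNhd ℂ f (ball c δ))
    (h0 : ∀ x : ℂ, x.im = 0 → x ∈ ball c δ → f x = 0) :
    ∀ v ∈ ball c δ, f v = 0 := by
  have hconn : IsPreconnected (ball c δ) := (convex_ball c δ).isPreconnected
  have hmem : c ∈ ball c δ := mem_ball_self hδ
  have hfreq : ∃ᶠ z in nhdsWithin c {c}ᶜ, f z = 0 := by
    have htend : Filter.Tendsto (fun n : ℕ => c + ((1 : ℝ) / (n + 1) : ℝ))
        Filter.atTop (nhdsWithin c {c}ᶜ) := by
      rw [tendsto_nhdsWithin_iff]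
      constructor
      · have : Filter.Tendsto (fun n : ℕ => ((1 : ℝ) / (n + 1) : ℝ)) Filter.atTop (nhds 0) :=
          tendsto_one_div_add_atTop_nhds_zero_nat
        have h2 : Filter.Tendsto (fun n : ℕ => (((1 : ℝ) / (n + 1) : ℝ) : ℂ))
            Filter.atTop (nhds (((0 : ℝ) : ℂ))) :=
          (Complex.continuous_ofReal.tendsto 0).comp this
        rw [Complex.ofReal_zero] at h2
        simpa using h2.const_add c
      · filter_upwards with n
        simp only [Set.mem_compl_iff, Set.mem_singleton_iff]
        intro h
        have : (((1 : ℝ) / (n + 1) : ℝ) : ℂ) = 0 := by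
          have := sub_eq_zero.mpr h.symm
          simpa using this.symm
        have h1 : (1 : ℝ) / (n + 1) = 0 := by exact_mod_cast this
        have : (0 : ℝ) < 1 / (n + 1) := by positivity
        linarith
    have hev : ∀ᶠ n : ℕ in Filter.atTop, f (c + ((1 : ℝ) / (n + 1) : ℝ)) = 0 := by
      have hball : ∀ᶠ n : ℕ in Filter.atTop,
          (c + ((1 : ℝ) / (n + 1) : ℝ)) ∈ ball c δ := by
        have := htend.mono_right nhdsWithin_le_nhds
        exact this.eventually (isOpen_ball.eventually_mem hmem)
      filter_upwards [hball] with n hn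
      exact h0 _ (by simp [hc]) hn
    exact htend.frequently hev.frequently
  exact fun v hv =>
    hf.eqOn_zero_of_preconnected_of_frequently_eq_zero hconn hmem hfreq hv

/-- Holomorphic–antiholomorphic vanishing principle: let `U ⊆ ℂ` be a nonempty open
connected set, `U* = conj '' U`, and `F : ℂ × ℂ → ℂ` analytic on `U ×ˢ U*`. If
`F (z, conj z) = 0` for all `z ∈ U`, then `F (z, w) = 0` for all `z ∈ U`, `w ∈ U*`. -/
theorem stmt11 (U : Set ℂ) (hU : U.Nonempty) (hUopen : IsOpen U)
    (hUconn : IsConnected U)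
    (F : ℂ × ℂ → ℂ)
    (hF : AnalyticOnNhd ℂ F (U ×ˢ ((fun z => conj z) '' U)))
    (hvanish : ∀ z ∈ U, F (z, conj z) = 0) :
    ∀ z ∈ U, ∀ w ∈ (fun z => conj z) '' U, F (z, w) = 0 := by
  classical
  open Complex Metric in
  obtain ⟨z₀, hz₀⟩ := hU
  obtain ⟨r, hr, hball⟩ := Metric.isOpen_iff.1 hUopen z₀ hz₀
  set u₀ : ℂ := (z₀.re : ℂ) with hu₀
  set v₀ : ℂ := (z₀.im : ℂ) with hv₀
  have hz₀eq : u₀ + I * v₀ = z₀ := by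
    rw [hu₀, hv₀, mul_comm]
    exact Complex.re_add_im z₀
  have hz₀conj : u₀ - I * v₀ = conj z₀ := by
    rw [Complex.ext_iff]
    simp [hu₀, hv₀]
  set δ : ℝ := r / 2 with hδdef
  have hδ : 0 < δ := by positivity
  -- membership of the changed variables
  have hmemU : ∀ u ∈ ball u₀ δ, ∀ v ∈ ball v₀ δ, (u + I * v) ∈ U := by
    intro u hu v hv
    apply hball
    rw [mem_ball] at hu hv ⊢
    calc dist (u + I * v) z₀ = ‖(u - u₀) + I * (v - v₀)‖ := by
          rw [dist_eq_norm, ← hz₀eq]; ring_nf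
      _ ≤ ‖u - u₀‖ + ‖I * (v - v₀)‖ := norm_add_le _ _
      _ = dist u u₀ + dist v v₀ := by simp [dist_eq]
      _ < δ + δ := add_lt_add hu hv
      _ = r := by rw [hδdef]; ring
  have hmemU' : ∀ u ∈ ball u₀ δ, ∀ v ∈ ball v₀ δ,
      (u - I * v) ∈ (fun z => conj z) '' U := by
    intro u hu v hv
    refine ⟨conj (u - I * v), ?_, Complex.conj_conj _⟩
    apply hball
    rw [mem_ball] at hu hv ⊢
    have hdd : dist (conj (u - I * v)) z₀ = dist (u - I * v) (conj z₀) := by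
      conv_lhs => rw [show z₀ = conj (conj z₀) from (Complex.conj_conj z₀).symm]
      exact Complex.dist_conj_conj _ _
    rw [hdd, ← hz₀conj]
    calc dist (u - I * v) (u₀ - I * v₀) = ‖(u - u₀) - I * (v - v₀)‖ := by
          rw [dist_eq_norm]; ring_nf
      _ ≤ ‖u - u₀‖ + ‖I * (v - v₀)‖ := norm_sub_le _ _
      _ = dist u u₀ + dist v v₀ := by simp [dist_eq]
      _ < δ + δ := add_lt_add hu hv
      _ = r := by rw [hδdef]; ring
  have hu₀mem : u₀ ∈ ball u₀ δ := mem_ball_self hδ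
  have hv₀mem : v₀ ∈ ball v₀ δ := mem_ball_self hδ
  have hu₀im : u₀.im = 0 := by simp [hu₀]
  have hv₀im : v₀.im = 0 := by simp [hv₀]
  -- Step A: vanishing at real points
  have hA : ∀ u ∈ ball u₀ δ, ∀ v ∈ ball v₀ δ, u.im = 0 → v.im = 0 →
      F (u + I * v, u - I * v) = 0 := by
    intro u hu v hv hui hvi
    have hmem : (u + I * v) ∈ U := hmemU u hu v hv
    have hconj : conj (u + I * v) = u - I * v := by
      rw [Complex.ext_iff]
      simp [hui, hvi]
    have := hvanish _ hmem
    rwa [hconj] at this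
  -- analyticity of the slice in v, for fixed u in the ball
  have hslice_v : ∀ u ∈ ball u₀ δ,
      AnalyticOnNhd ℂ (fun v => F (u + I * v, u - I * v)) (ball v₀ δ) := by
    intro u hu v hv
    have hFat : AnalyticAt ℂ F (u + I * v, u - I * v) :=
      hF _ ⟨hmemU u hu v hv, hmemU' u hu v hv⟩
    have hinner : AnalyticAt ℂ (fun w : ℂ => (u + I * w, u - I * w)) v := by
      apply AnalyticAt.prod
      · exact analyticAt_const.add (analyticAt_const.mul analyticAt_id)
      · exact analyticAt_const.sub (analyticAt_const.mul analyticAt_id)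
    exact AnalyticAt.comp (f := fun w : ℂ => (u + I * w, u - I * w)) (x := v) hFat hinner
  -- Step B: for real u, vanishing for all v in the ball
  have hB : ∀ u ∈ ball u₀ δ, u.im = 0 → ∀ v ∈ ball v₀ δ,
      F (u + I * v, u - I * v) = 0 := by
    intro u hu hui
    exact stmt11_onevar hδ hv₀im (hslice_v u hu)
      (fun x hxi hx => hA u hu x hx hui hxi)
  -- analyticity of the slice in u, for fixed v in the ball
  have hslice_u : ∀ v ∈ ball v₀ δ,
      AnalyticOnNhd ℂ (fun u => F (u + I * v, u - I * v)) (ball u₀ δ) := by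
    intro v hv u hu
    have hFat : AnalyticAt ℂ F (u + I * v, u - I * v) :=
      hF _ ⟨hmemU u hu v hv, hmemU' u hu v hv⟩
    have hinner : AnalyticAt ℂ (fun w : ℂ => (w + I * v, w - I * v)) u := by
      apply AnalyticAt.prod
      · exact analyticAt_id.add analyticAt_const
      · exact analyticAt_id.sub analyticAt_const
    exact AnalyticAt.comp (f := fun w : ℂ => (w + I * v, w - I * v)) (x := u) hFat hinner
  -- Step C: vanishing for all u, v in the balls
  have hC : ∀ u ∈ ball u₀ δ, ∀ v ∈ ball v₀ δ, F (u + I * v, u - I * v) = 0 := by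
    intro u hu v hv
    have := stmt11_onevar hδ hu₀im (hslice_u v hv)
      (fun x hxi hx => hB x hx hxi v hv) u hu
    exact this
  -- local vanishing of F near (z₀, conj z₀)
  have hev : F =ᶠ[nhds (z₀, conj z₀)] 0 := by
    have hcont : Continuous (fun p : ℂ × ℂ => ((p.1 + p.2) / 2, (p.1 - p.2) / (2 * I))) := by
      fun_prop
    have hpre : (fun p : ℂ × ℂ => ((p.1 + p.2) / 2, (p.1 - p.2) / (2 * I))) ⁻¹'
        (ball u₀ δ ×ˢ ball v₀ δ) ∈ nhds (z₀, conj z₀) := by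
      apply hcont.continuousAt.preimage_mem_nhds
      have h1 : (z₀ + conj z₀) / 2 = u₀ := by
        rw [Complex.add_conj, hu₀]; push_cast; ring
      have h2 : (z₀ - conj z₀) / (2 * I) = v₀ := by
        rw [Complex.sub_conj, hv₀]
        field_simp
        simp
      rw [h1, h2]
      exact (isOpen_ball.prod isOpen_ball).mem_nhds ⟨hu₀mem, hv₀mem⟩
    filter_upwards [hpre] with p hp
    obtain ⟨hp1, hp2⟩ := hp
    have key := hC _ hp1 _ hp2
    have hI : (I : ℂ) ≠ 0 := I_ne_zero
    have e1 : (p.1 + p.2) / 2 + I * ((p.1 - p.2) / (2 * I)) = p.1 := by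
      field_simp
      ring
    have e2 : (p.1 + p.2) / 2 - I * ((p.1 - p.2) / (2 * I)) = p.2 := by
      field_simp
      ring
    rw [e1, e2] at key
    simpa using key
  -- globalize via the identity principle on the connected product set
  have hconj_cont : Continuous (fun z : ℂ => conj z) := Complex.continuous_conj
  have hUstar : IsConnected ((fun z => conj z) '' U) := hUconn.image _ hconj_cont.continuousOn
  have hprod : IsPreconnected (U ×ˢ ((fun z => conj z) '' U)) :=
    (hUconn.prod hUstar).isPreconnected
  have hz₀star : conj z₀ ∈ (fun z => conj z) '' U := ⟨z₀, hz₀, rfl⟩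
  have := hF.eqOn_zero_of_preconnected_of_eventuallyEq_zero hprod
    (Set.mk_mem_prod hz₀ hz₀star) hev
  intro z hz w hw
  exact this (Set.mk_mem_prod hz hw)
end

section
/- Let U ⊆ ℂ be a nonempty open connected set, let N ≥ 1, and let f₁, …, f_N, g₁, …, g_N : ℂ → ℂ be functions such that each f_j is analytic on U and each g_j is antiholomorphic on U (i.e., the function z ↦ conj(g_j(z)) is analytic on U). If Σ_{j=1}^N f_j(z)·g_j(z) = 0 for every z ∈ U, then Σ_{j=1}^N f_j(z)·g_j(w) = 0 for every pair z, w ∈ U. -/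
open ComplexConjugate
open Filter Metric Topology

lemma conjConj_hasDerivAt {h : ℂ → ℂ} {v d : ℂ} (hh : HasDerivAt h d v) :
    HasDerivAt (fun u => conj (h (conj u))) (conj d) (conj v) := by
  rw [hasDerivAt_iff_tendsto_slope] at hh ⊢
  have hc : Tendsto (fun u : ℂ => conj u) (𝓝[≠] (conj v)) (𝓝[≠] v) := by
    refine tendsto_nhdsWithin_of_tendsto_nhds_of_eventually_within _ ?_ ?_
    · simpa using ((Complex.continuous_conj.tendsto (conj v)).mono_left nhdsWithin_le_nhds)
    · filter_upwards [self_mem_nhdsWithin] with u hu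
      simp only [Set.mem_compl_iff, Set.mem_singleton_iff] at hu ⊢
      intro hcon
      exact hu (by simpa using congrArg conj hcon)
  have := (Complex.continuous_conj.tendsto d).comp (hh.comp hc)
  refine this.congr ?_
  intro u
  simp [Function.comp, slope_def_field, map_div₀, map_sub, Complex.conj_conj]

lemma conjConj_analyticOnNhd {h : ℂ → ℂ} {U : Set ℂ} (hU : IsOpen U)
    (hh : AnalyticOnNhd ℂ h U) :
    AnalyticOnNhd ℂ (fun u => conj (h (conj u))) ((fun u : ℂ => conj u) ⁻¹' U) := by
  have hopen : IsOpen ((fun u : ℂ => conj u) ⁻¹' U) := hU.preimage Complex.continuous_conj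
  refine DifferentiableOn.analyticOnNhd (fun u hu => ?_) hopen
  have h1 : HasDerivAt h (deriv h (conj u)) (conj u) :=
    ((hh _ hu).differentiableAt).hasDerivAt
  have h2 := conjConj_hasDerivAt h1
  rw [Complex.conj_conj] at h2
  exact h2.differentiableAt.differentiableWithinAt

lemma freq_real_zero {P : ℂ → Prop} {ε : ℝ} (hε : 0 < ε)
    (h : ∀ a : ℝ, 0 < a → a < ε → P a) : ∃ᶠ x in 𝓝[≠] (0 : ℂ), P x := by
  have hu0 : Tendsto (fun n : ℕ => (ε / 2) / (n + 1)) atTop (𝓝 (0 : ℝ)) := by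
    have := tendsto_one_div_add_atTop_nhds_zero_nat.const_mul (ε / 2)
    simpa [div_eq_mul_inv, mul_comm] using this
  have hu1 : Tendsto (fun n : ℕ => (((ε / 2) / (n + 1) : ℝ) : ℂ)) atTop (𝓝 (0 : ℂ)) := by
    have := (Complex.continuous_ofReal.tendsto 0).comp hu0
    simpa only [Function.comp_def, Complex.ofReal_zero] using this
  have hpos : ∀ n : ℕ, (0 : ℝ) < (ε / 2) / (n + 1) := by
    intro n; positivity
  have hu2 : Tendsto (fun n : ℕ => (((ε / 2) / (n + 1) : ℝ) : ℂ)) atTop (𝓝[≠] (0 : ℂ)) := by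
    refine tendsto_nhdsWithin_of_tendsto_nhds_of_eventually_within _ hu1 ?_
    filter_upwards with n
    simp only [Set.mem_compl_iff, Set.mem_singleton_iff, Complex.ofReal_eq_zero]
    exact ne_of_gt (hpos n)
  refine hu2.frequently ((Eventually.of_forall fun n => ?_).frequently)
  refine h _ (hpos n) ?_
  have h1 : (1 : ℝ) ≤ (n : ℝ) + 1 := by simp
  calc (ε / 2) / (n + 1) ≤ ε / 2 / 1 := by
        apply div_le_div_of_nonneg_left (le_of_lt (by positivity)) one_pos h1
    _ < ε := by linarith

lemma twovar {F : ℂ → ℂ → ℂ} {s : ℝ} (hs : 0 < s)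
    (hx : ∀ y ∈ ball (0 : ℂ) s, AnalyticOnNhd ℂ (fun x => F x y) (ball 0 s))
    (hy : ∀ x ∈ ball (0 : ℂ) s, AnalyticOnNhd ℂ (fun y => F x y) (ball 0 s))
    (hdiag : ∀ a b : ℝ, |a| < s → |b| < s → F a b = 0) :
    ∀ x ∈ ball (0 : ℂ) s, ∀ y ∈ ball (0 : ℂ) s, F x y = 0 := by
  have hmemR : ∀ a : ℝ, |a| < s → (a : ℂ) ∈ ball (0 : ℂ) s := by
    intro a ha
    simp only [mem_ball, Complex.dist_eq, sub_zero, Complex.norm_real, Real.norm_eq_abs]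
    exact ha
  have h0mem : (0 : ℂ) ∈ ball (0 : ℂ) s := mem_ball_self hs
  have step1 : ∀ b : ℝ, |b| < s → ∀ x ∈ ball (0 : ℂ) s, F x b = 0 := by
    intro b hb
    refine AnalyticOnNhd.eqOn_zero_of_preconnected_of_frequently_eq_zero
      (hx _ (hmemR b hb)) (convex_ball _ _).isPreconnected h0mem ?_
    exact freq_real_zero hs fun a ha0 ha =>
      hdiag a b (by rwa [abs_of_pos ha0]) hb
  intro x hxmem y hymem
  refine AnalyticOnNhd.eqOn_zero_of_preconnected_of_frequently_eq_zero
    (hy _ hxmem) (convex_ball _ _).isPreconnected h0mem ?_ hymem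
  exact freq_real_zero hs fun b hb0 hb =>
    step1 b (by rwa [abs_of_pos hb0]) x hxmem


/-- The holomorphic–antiholomorphic trick: let `U ⊆ ℂ` be a nonempty open connected set
and `f j` analytic on `U`, `g j` antiholomorphic on `U` (i.e. `z ↦ conj (g j z)` is
analytic on `U`), `1 ≤ N`. If `∑ j, f j z * g j z = 0` for all `z ∈ U`, then
`∑ j, f j z * g j w = 0` for all `z, w ∈ U`. -/
theorem stmt12 (U : Set ℂ) (hU : U.Nonempty) (hUopen : IsOpen U)
    (hUconn : IsConnected U) (N : ℕ) (hN : 1 ≤ N)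
    (f g : Fin N → ℂ → ℂ)
    (hf : ∀ j, AnalyticOnNhd ℂ (f j) U)
    (hg : ∀ j, AnalyticOnNhd ℂ (fun z => conj (g j z)) U)
    (hvanish : ∀ z ∈ U, ∑ j, f j z * g j z = 0) :
    ∀ z ∈ U, ∀ w ∈ U, ∑ j, f j z * g j w = 0 := by
  obtain ⟨p, hp⟩ := hU
  obtain ⟨r, hr0, hball⟩ := Metric.isOpen_iff.mp hUopen p hp
  have hr2 : (0 : ℝ) < r / 2 := by linarith
  have hH : ∀ j, AnalyticOnNhd ℂ (fun u => g j (conj u)) ((fun u : ℂ => conj u) ⁻¹' U) := by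
    intro j
    have := conjConj_analyticOnNhd hUopen (hg j)
    simpa only [Complex.conj_conj] using this
  have habs : ∀ x y : ℂ, ‖x‖ < r / 2 → ‖y‖ < r / 2 →
      ‖x + Complex.I * y‖ < r := by
    intro x y hx hy
    calc ‖x + Complex.I * y‖
        ≤ ‖x‖ + ‖Complex.I * y‖ := norm_add_le _ _
      _ = ‖x‖ + ‖y‖ := by simp
      _ < r := by linarith
  have hmem1 : ∀ x y : ℂ, ‖x‖ < r / 2 → ‖y‖ < r / 2 →
      p + (x + Complex.I * y) ∈ U := by
    intro x y hx hy
    apply hball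
    simp only [mem_ball, Complex.dist_eq, add_sub_cancel_left]
    exact habs x y hx hy
  have hmem2 : ∀ x y : ℂ, ‖x‖ < r / 2 → ‖y‖ < r / 2 →
      conj p + (x - Complex.I * y) ∈ ((fun u : ℂ => conj u) ⁻¹' U) := by
    intro x y hx hy
    have hc : conj (conj p + (x - Complex.I * y))
        = p + (conj x + Complex.I * conj y) := by
      rw [map_add, map_sub, map_mul, Complex.conj_conj, Complex.conj_I]
      ring
    simp only [Set.mem_preimage]
    rw [hc]
    exact hmem1 _ _ (by simpa using hx) (by simpa using hy)
  set F : ℂ → ℂ → ℂ := fun x y =>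
    ∑ j, f j (p + (x + Complex.I * y)) * g j (conj (conj p + (x - Complex.I * y))) with hF
  have hxball : ∀ x : ℂ, x ∈ ball (0 : ℂ) (r / 2) → ‖x‖ < r / 2 := by
    intro x hx; simpa [mem_ball, Complex.dist_eq] using hx
  have hAx : ∀ y ∈ ball (0 : ℂ) (r / 2), AnalyticOnNhd ℂ (fun x => F x y) (ball 0 (r / 2)) := by
    intro y hy x hx
    refine Finset.analyticAt_fun_sum _ fun j _ => AnalyticAt.mul ?_ ?_
    · have h1 : AnalyticAt ℂ (fun t : ℂ => p + (t + Complex.I * y)) x :=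
        analyticAt_const.add (analyticAt_id.add analyticAt_const)
      exact AnalyticAt.comp (x := x) (f := fun t : ℂ => p + (t + Complex.I * y))
        (hf j _ (hmem1 x y (hxball x hx) (hxball y hy))) h1
    · have h1 : AnalyticAt ℂ (fun t : ℂ => conj p + (t - Complex.I * y)) x :=
        analyticAt_const.add (analyticAt_id.sub analyticAt_const)
      exact AnalyticAt.comp (x := x) (f := fun t : ℂ => conj p + (t - Complex.I * y))
        (hH j _ (hmem2 x y (hxball x hx) (hxball y hy))) h1
  have hAy : ∀ x ∈ ball (0 : ℂ) (r / 2), AnalyticOnNhd ℂ (fun y => F x y) (ball 0 (r / 2)) := by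
    intro x hx y hy
    refine Finset.analyticAt_fun_sum _ fun j _ => AnalyticAt.mul ?_ ?_
    · have h1 : AnalyticAt ℂ (fun t : ℂ => p + (x + Complex.I * t)) y :=
        analyticAt_const.add (analyticAt_const.add (analyticAt_const.mul analyticAt_id))
      exact AnalyticAt.comp (x := y) (f := fun t : ℂ => p + (x + Complex.I * t))
        (hf j _ (hmem1 x y (hxball x hx) (hxball y hy))) h1
    · have h1 : AnalyticAt ℂ (fun t : ℂ => conj p + (x - Complex.I * t)) y :=
        analyticAt_const.add (analyticAt_const.sub (analyticAt_const.mul analyticAt_id))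
      exact AnalyticAt.comp (x := y) (f := fun t : ℂ => conj p + (x - Complex.I * t))
        (hH j _ (hmem2 x y (hxball x hx) (hxball y hy))) h1
  have hdiag : ∀ a b : ℝ, |a| < r / 2 → |b| < r / 2 → F a b = 0 := by
    intro a b ha hb
    have hz : p + ((a : ℂ) + Complex.I * (b : ℂ)) ∈ U :=
      hmem1 _ _ (by simpa using ha) (by simpa using hb)
    have hc : conj (conj p + ((a : ℂ) - Complex.I * (b : ℂ)))
        = p + ((a : ℂ) + Complex.I * (b : ℂ)) := by
      rw [map_add, map_sub, map_mul, Complex.conj_conj, Complex.conj_I,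
        Complex.conj_ofReal, Complex.conj_ofReal]
      ring
    simp only [hF]
    rw [hc]
    exact hvanish _ hz
  have hlocal : ∀ z ∈ ball p (r / 2), ∀ w ∈ ball p (r / 2), ∑ j, f j z * g j w = 0 := by
    intro z hz w hw
    have hz' : ‖z - p‖ < r / 2 := by simpa [mem_ball, Complex.dist_eq] using hz
    have hw' : ‖w - p‖ < r / 2 := by simpa [mem_ball, Complex.dist_eq] using hw
    set x : ℂ := ((z - p) + (conj w - conj p)) / 2 with hxdef
    set y : ℂ := ((z - p) - (conj w - conj p)) / (2 * Complex.I) with hydef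
    have hcw : ‖conj w - conj p‖ = ‖w - p‖ := by
      rw [← map_sub]; exact Complex.norm_conj _
    have hxa : ‖x‖ < r / 2 := by
      rw [hxdef]
      calc ‖((z - p) + (conj w - conj p)) / 2‖
          = ‖(z - p) + (conj w - conj p)‖ / 2 := by
            rw [norm_div]; simp
        _ ≤ (‖z - p‖ + ‖conj w - conj p‖) / 2 := by
            gcongr; exact norm_add_le _ _
        _ < r / 2 := by rw [hcw]; linarith
    have hya : ‖y‖ < r / 2 := by
      rw [hydef]
      have h2I : ‖2 * Complex.I‖ = 2 := by simp
      have htri : ‖(z - p) - (conj w - conj p)‖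
          ≤ ‖z - p‖ + ‖conj w - conj p‖ := by
        have h := norm_add_le (z - p) (-(conj w - conj p))
        rwa [← sub_eq_add_neg, norm_neg] at h
      calc ‖((z - p) - (conj w - conj p)) / (2 * Complex.I)‖
          = ‖(z - p) - (conj w - conj p)‖ / 2 := by rw [norm_div, h2I]
        _ ≤ (‖z - p‖ + ‖conj w - conj p‖) / 2 := by gcongr
        _ < r / 2 := by rw [hcw]; linarith
    have hxy1 : x + Complex.I * y = z - p := by
      rw [hxdef, hydef]
      field_simp
      ring
    have hxy2 : x - Complex.I * y = conj w - conj p := by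
      rw [hxdef, hydef]
      field_simp
      ring
    have hmemx : x ∈ ball (0 : ℂ) (r / 2) := by simpa [mem_ball, Complex.dist_eq] using hxa
    have hmemy : y ∈ ball (0 : ℂ) (r / 2) := by simpa [mem_ball, Complex.dist_eq] using hya
    have hzero := twovar hr2 hAx hAy hdiag x hmemx y hmemy
    rw [hF] at hzero
    simp only at hzero
    rw [hxy1, hxy2] at hzero
    have e1 : p + (z - p) = z := by ring
    have e2 : conj p + (conj w - conj p) = conj w := by ring
    rw [e1, e2] at hzero
    simpa [Complex.conj_conj] using hzero
  have hpball : p ∈ ball p (r / 2) := mem_ball_self hr2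
  have hstep : ∀ z ∈ ball p (r / 2), ∀ w ∈ U, ∑ j, f j z * g j w = 0 := by
    intro z hz
    have hk : AnalyticOnNhd ℂ (fun w => ∑ j, conj (f j z) * conj (g j w)) U := by
      intro w hw
      exact Finset.analyticAt_fun_sum _ fun j _ => analyticAt_const.mul (hg j w hw)
    have hev : (fun w => ∑ j, conj (f j z) * conj (g j w)) =ᶠ[𝓝 p] 0 := by
      filter_upwards [isOpen_ball.mem_nhds hpball] with w hw
      have h0 := hlocal z hz w hw
      have h1 : conj (∑ j, f j z * g j w) = 0 := by rw [h0]; simp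
      rw [map_sum] at h1
      simpa [map_mul] using h1
    have heq := AnalyticOnNhd.eqOn_zero_of_preconnected_of_eventuallyEq_zero hk
      hUconn.isPreconnected hp hev
    intro w hw
    have h0 := heq hw
    simp only [Pi.zero_apply] at h0
    have h1 : conj (∑ j, f j z * g j w) = 0 := by
      rw [map_sum]
      simpa [map_mul] using h0
    calc ∑ j, f j z * g j w = conj (conj (∑ j, f j z * g j w)) := (Complex.conj_conj _).symm
      _ = 0 := by rw [h1, map_zero]
  intro z hz w hw
  have hk2 : AnalyticOnNhd ℂ (fun z => ∑ j, f j z * g j w) U := by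
    intro z' hz'
    exact Finset.analyticAt_fun_sum _ fun j _ => (hf j z' hz').mul analyticAt_const
  have hev : (fun z => ∑ j, f j z * g j w) =ᶠ[𝓝 p] 0 := by
    filter_upwards [isOpen_ball.mem_nhds hpball] with z' hz'
    exact hstep z' hz' w hw
  have := (AnalyticOnNhd.eqOn_zero_of_preconnected_of_eventuallyEq_zero hk2
    hUconn.isPreconnected hp hev) hz
  simpa using this
end
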